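/- arXiv:1811.01057 — 4 statements merged into one kernel-verified Lean document; each statement's English description precedes it below -/
import Mathlib

section
/- Let W ∈ ℝ^{m×d}, c ∈ ℝ^m, and let P be a symmetric PSD matrix indexed by {1, x_1,...,x_d, z_1,...,z_m} with P[1,1] = 1 satisfying: (a) P[z_i²] = W_i^T P[x z_i] for all i = 1,...,m (where W_i is the i-th row of W and P[x z_i] ∈ ℝ^d is the vector of entries P[x_j z_i]); and (b) P[x_j²] ≤ 1 for all j = 1,...,d. Then c^T P[z] ≤ √d · ‖W‖₂ · ‖c‖₂. -/
open Matrix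
open scoped MatrixOrder

/-- The spectral (ℓ₂ operator) norm of a real matrix. -/
noncomputable def matSpectralNorm {m d : ℕ} (W : Matrix (Fin m) (Fin d) ℝ) : ℝ :=
  ‖LinearMap.toContinuousLinearMap (Matrix.toEuclideanLin W)‖

section aux

variable {ι : Type*} [Fintype ι] [DecidableEq ι]

/-- Cauchy–Schwarz for the bilinear form of a real PSD matrix. -/
lemma psd_cauchy_schwarz (P : Matrix ι ι ℝ) (hP : P.PosSemidef) (v w : ι → ℝ) :
    (v ⬝ᵥ P *ᵥ w) ^ 2 ≤ (v ⬝ᵥ P *ᵥ v) * (w ⬝ᵥ P *ᵥ w) := by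
  have hsym : ∀ a b, P a b = P b a := by
    intro a b
    have h := hP.1
    have := congrFun (congrFun h a) b
    simpa [Matrix.conjTranspose_apply] using this.symm
  have hQ : ∀ x : ι → ℝ, 0 ≤ x ⬝ᵥ P *ᵥ x := by
    intro x; simpa using hP.dotProduct_mulVec_nonneg x
  have hBsymm : ∀ x y : ι → ℝ, x ⬝ᵥ P *ᵥ y = y ⬝ᵥ P *ᵥ x := by
    intro x y
    simp only [dotProduct, Matrix.mulVec, Finset.mul_sum]
    rw [Finset.sum_comm]
    refine Finset.sum_congr rfl fun a _ => Finset.sum_congr rfl fun b _ => ?_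
    rw [hsym b a]; ring
  have key : ∀ t : ℝ, 0 ≤ (w ⬝ᵥ P *ᵥ w) * (t * t) + (2 * (v ⬝ᵥ P *ᵥ w)) * t
      + (v ⬝ᵥ P *ᵥ v) := by
    intro t
    have h0 := hQ (v + t • w)
    have hexp : (v + t • w) ⬝ᵥ P *ᵥ (v + t • w)
        = (w ⬝ᵥ P *ᵥ w) * (t * t) + (2 * (v ⬝ᵥ P *ᵥ w)) * t + (v ⬝ᵥ P *ᵥ v) := by
      rw [Matrix.mulVec_add, dotProduct_add, add_dotProduct,
        add_dotProduct, Matrix.mulVec_smul, dotProduct_smul,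
        smul_dotProduct, smul_dotProduct, dotProduct_smul]
      rw [hBsymm w v]
      simp only [smul_eq_mul]; ring
    rw [hexp] at h0; exact h0
  have hd := discrim_le_zero key
  rw [discrim] at hd
  nlinarith [hd]

end aux

/-- Operator norm bound coordinatewise. -/
lemma spectral_bound_vec {m d : ℕ} (W : Matrix (Fin m) (Fin d) ℝ) (v : Fin d → ℝ) :
    (∑ i, (∑ j, W i j * v j) ^ 2) ≤ matSpectralNorm W ^ 2 * ∑ j, v j ^ 2 := by
  set L := LinearMap.toContinuousLinearMap (Matrix.toEuclideanLin W) with hL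
  set v' : EuclideanSpace ℝ (Fin d) := (WithLp.equiv 2 (Fin d → ℝ)).symm v with hv'
  have hLv : L v' = (WithLp.equiv 2 (Fin m → ℝ)).symm (W *ᵥ v) := by
    simp [hL, hv', Matrix.toEuclideanLin_apply_piLp_toLp]
  have hnorm := L.le_opNorm v'
  have hnv' : ‖v'‖ = Real.sqrt (∑ j, v j ^ 2) := by
    rw [EuclideanSpace.norm_eq]
    congr 1
    refine Finset.sum_congr rfl fun j _ => ?_
    simp [hv', Real.norm_eq_abs, sq_abs]
  have hnLv : ‖L v'‖ = Real.sqrt (∑ i, (∑ j, W i j * v j) ^ 2) := by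
    rw [hLv, EuclideanSpace.norm_eq]
    congr 1
    refine Finset.sum_congr rfl fun i _ => ?_
    simp [Real.norm_eq_abs, sq_abs, Matrix.mulVec, dotProduct]
  have h1 : Real.sqrt (∑ i, (∑ j, W i j * v j) ^ 2)
      ≤ matSpectralNorm W * Real.sqrt (∑ j, v j ^ 2) := by
    rw [← hnLv, ← hnv']; exact hnorm
  have h2 : (0:ℝ) ≤ ∑ i, (∑ j, W i j * v j) ^ 2 :=
    Finset.sum_nonneg fun _ _ => sq_nonneg _
  have h3 : (0:ℝ) ≤ ∑ j, v j ^ 2 := Finset.sum_nonneg fun _ _ => sq_nonneg _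
  calc (∑ i, (∑ j, W i j * v j) ^ 2)
      = Real.sqrt (∑ i, (∑ j, W i j * v j) ^ 2) ^ 2 := (Real.sq_sqrt h2).symm
    _ ≤ (matSpectralNorm W * Real.sqrt (∑ j, v j ^ 2)) ^ 2 := by
        apply pow_le_pow_left₀ (Real.sqrt_nonneg _) h1
    _ = matSpectralNorm W ^ 2 * ∑ j, v j ^ 2 := by
        rw [mul_pow, Real.sq_sqrt h3]

/-- Lemma "spectral bound": Let `P` be a symmetric PSD moment matrix
indexed by `{1, x₁,…,x_d, z₁,…,z_m}` with `P[1,1] = 1`, satisfying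
(a) `P[z_i²] = W_iᵀ P[x z_i]` for all `i`, and (b) `P[x_j²] ≤ 1` for all `j`.
Then `cᵀ P[z] ≤ √d · ‖W‖₂ · ‖c‖₂`. -/
theorem stmt4 (m d : ℕ) (W : Matrix (Fin m) (Fin d) ℝ) (c : Fin m → ℝ)
    (P : Matrix (Unit ⊕ Fin d ⊕ Fin m) (Unit ⊕ Fin d ⊕ Fin m) ℝ)
    (hP : P.PosSemidef)
    (h11 : P (Sum.inl ()) (Sum.inl ()) = 1)
    (hrelu : ∀ i, P (Sum.inr (Sum.inr i)) (Sum.inr (Sum.inr i)) =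
      ∑ j, W i j * P (Sum.inr (Sum.inl j)) (Sum.inr (Sum.inr i)))
    (hinput : ∀ j, P (Sum.inr (Sum.inl j)) (Sum.inr (Sum.inl j)) ≤ 1) :
    ∑ i, c i * P (Sum.inl ()) (Sum.inr (Sum.inr i)) ≤
      Real.sqrt d * matSpectralNorm W * Real.sqrt (∑ i, c i ^ 2) := by
  classical
  set u : Fin m → ℝ := fun i => P (Sum.inl ()) (Sum.inr (Sum.inr i)) with hu
  set su : Fin m → ℝ := fun i => P (Sum.inr (Sum.inr i)) (Sum.inr (Sum.inr i)) with hsu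
  have hQ : ∀ x : (Unit ⊕ Fin d ⊕ Fin m) → ℝ, 0 ≤ x ⬝ᵥ P *ᵥ x := by intro x; simpa using hP.dotProduct_mulVec_nonneg x
  -- dot products with basis vectors
  have hmv : ∀ (v : (Unit ⊕ Fin d ⊕ Fin m) → ℝ) (b : (Unit ⊕ Fin d ⊕ Fin m)), v ⬝ᵥ P *ᵥ Pi.single b 1 = ∑ a, v a * P a b := by
    intro v b
    rw [Matrix.mulVec_single]
    simp [dotProduct, Matrix.col_apply]
  have hsingle : ∀ a b : (Unit ⊕ Fin d ⊕ Fin m), (Pi.single a 1 : (Unit ⊕ Fin d ⊕ Fin m) → ℝ) ⬝ᵥ P *ᵥ Pi.single b 1 = P a b := by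
    intro a b
    rw [hmv]
    simp [Pi.single_apply]
  -- the w-vectors
  set wv : Fin m → (Unit ⊕ Fin d ⊕ Fin m) → ℝ := fun i => Sum.elim 0 (Sum.elim (W i) 0) with hwv
  -- Step A : u i ^ 2 ≤ su i
  have stepA : ∀ i, u i ^ 2 ≤ su i := by
    intro i
    have h := psd_cauchy_schwarz P hP (Pi.single (Sum.inl ()) 1)
      (Pi.single (Sum.inr (Sum.inr i)) 1)
    rw [hsingle, hsingle, hsingle, h11, one_mul] at h
    exact h
  have hsu_nonneg : ∀ i, 0 ≤ su i := fun i => le_trans (sq_nonneg _) (stepA i)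
  -- Step B : su i ≤ q i
  set q : Fin m → ℝ := fun i => wv i ⬝ᵥ P *ᵥ wv i with hq
  have hq_nonneg : ∀ i, 0 ≤ q i := fun i => hQ (wv i)
  have stepB : ∀ i, su i ≤ q i := by
    intro i
    have h := psd_cauchy_schwarz P hP (wv i) (Pi.single (Sum.inr (Sum.inr i)) 1)
    rw [hmv, hsingle] at h
    have hdot : ∑ a, wv i a * P a (Sum.inr (Sum.inr i)) = su i := by
      rw [Fintype.sum_sum_type]
      simp only [hwv, Sum.elim_inl, Pi.zero_apply, zero_mul, Finset.sum_const_zero]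
      rw [Fintype.sum_sum_type]
      simp only [Sum.elim_inr, Sum.elim_inl, Pi.zero_apply, zero_mul,
        Finset.sum_const_zero, add_zero, zero_add]
      exact (hrelu i).symm
    rw [hdot] at h
    rcases eq_or_lt_of_le (hsu_nonneg i) with h0 | h0
    · rw [← h0]; exact hq_nonneg i
    · nlinarith [h]
  -- the X block and its square root
  set emb : Fin d → (Unit ⊕ Fin d ⊕ Fin m) := fun j => Sum.inr (Sum.inl j) with hemb
  set X : Matrix (Fin d) (Fin d) ℝ := P.submatrix emb emb with hX
  have hXpsd : X.PosSemidef := hP.submatrix emb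
  set Y : Matrix (Fin d) (Fin d) ℝ := CFC.sqrt X with hY
  have hYY : Y * Y = X := CFC.sqrt_mul_sqrt_self X hXpsd.nonneg
  have hYsym : ∀ a b, Y a b = Y b a := by
    intro a b
    have h := (Matrix.nonneg_iff_posSemidef.mp (CFC.sqrt_nonneg X)).1
    have := congrFun (congrFun h a) b
    simpa [Matrix.conjTranspose_apply] using this.symm
  -- q i in terms of X
  have hq_eq : ∀ i, q i = ∑ j, ∑ k, W i j * X j k * W i k := by
    intro i
    simp only [hq, dotProduct, Matrix.mulVec]
    rw [Fintype.sum_sum_type]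
    simp only [hwv, Sum.elim_inl, Pi.zero_apply, zero_mul, Finset.sum_const_zero, zero_add]
    rw [Fintype.sum_sum_type]
    simp only [Sum.elim_inr, Sum.elim_inl, Pi.zero_apply, zero_mul,
      Finset.sum_const_zero, add_zero]
    refine Finset.sum_congr rfl fun j _ => ?_
    rw [Finset.mul_sum]
    rw [Fintype.sum_sum_type]
    simp only [Sum.elim_inl, Pi.zero_apply, mul_zero, Finset.sum_const_zero, zero_add]
    rw [Fintype.sum_sum_type]
    simp only [Sum.elim_inr, Sum.elim_inl, Pi.zero_apply, mul_zero,
      Finset.sum_const_zero, add_zero]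
    refine Finset.sum_congr rfl fun k _ => ?_
    simp only [hX, Matrix.submatrix_apply, hemb]
    ring
  -- rewrite q i via Y
  have hq_Y : ∀ i, q i = ∑ l, (∑ j, W i j * Y j l) ^ 2 := by
    intro i
    rw [hq_eq]
    have hXe : ∀ j k, X j k = ∑ l, Y j l * Y l k := by
      intro j k; rw [← hYY, Matrix.mul_apply]
    have lhs_eq : (∑ j, ∑ k, W i j * X j k * W i k)
        = ∑ j, ∑ k, ∑ l, W i j * (Y j l * Y l k) * W i k := by
      refine Finset.sum_congr rfl fun j _ => Finset.sum_congr rfl fun k _ => ?_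
      rw [hXe, Finset.mul_sum, Finset.sum_mul]
    rw [lhs_eq]
    have h1 : (∑ j, ∑ k, ∑ l, W i j * (Y j l * Y l k) * W i k)
        = ∑ j : Fin d, ∑ l : Fin d, ∑ k : Fin d, W i j * (Y j l * Y l k) * W i k :=
      Finset.sum_congr rfl fun j _ => Finset.sum_comm
    rw [h1, Finset.sum_comm]
    refine Finset.sum_congr rfl fun l _ => ?_
    rw [sq, Finset.sum_mul_sum]
    refine Finset.sum_congr rfl fun j _ => Finset.sum_congr rfl fun k _ => ?_
    rw [hYsym l k]; ring
  -- Step C : ∑ q ≤ matSpectralNorm W ^2 * d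
  have stepC : ∑ i, q i ≤ matSpectralNorm W ^ 2 * d := by
    have hswap : ∑ i, q i = ∑ l, ∑ i, (∑ j, W i j * Y j l) ^ 2 := by
      rw [Finset.sum_congr rfl fun i _ => hq_Y i, Finset.sum_comm]
    rw [hswap]
    have hbound : ∀ l, (∑ i, (∑ j, W i j * Y j l) ^ 2)
        ≤ matSpectralNorm W ^ 2 * ∑ j, Y j l ^ 2 :=
      fun l => spectral_bound_vec W (fun j => Y j l)
    calc (∑ l, ∑ i, (∑ j, W i j * Y j l) ^ 2)
        ≤ ∑ l, matSpectralNorm W ^ 2 * ∑ j, Y j l ^ 2 :=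
          Finset.sum_le_sum fun l _ => hbound l
      _ = matSpectralNorm W ^ 2 * ∑ l, ∑ j, Y j l ^ 2 := by rw [Finset.mul_sum]
      _ = matSpectralNorm W ^ 2 * ∑ l, X l l := by
          congr 1
          refine Finset.sum_congr rfl fun l _ => ?_
          rw [← hYY, Matrix.mul_apply]
          exact Finset.sum_congr rfl fun j _ => by rw [sq, hYsym j l]
      _ ≤ matSpectralNorm W ^ 2 * d := by
          apply mul_le_mul_of_nonneg_left _ (sq_nonneg _)
          calc (∑ l, X l l) ≤ ∑ _l : Fin d, (1:ℝ) :=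
                Finset.sum_le_sum fun l _ => by
                  simpa [hX, hemb, Matrix.submatrix_apply] using hinput l
            _ = d := by simp
  -- assemble
  have hsum_u : ∑ i, u i ^ 2 ≤ matSpectralNorm W ^ 2 * d := by
    calc (∑ i, u i ^ 2) ≤ ∑ i, su i := Finset.sum_le_sum fun i _ => stepA i
      _ ≤ ∑ i, q i := Finset.sum_le_sum fun i _ => stepB i
      _ ≤ matSpectralNorm W ^ 2 * d := stepC
  have hnormW : (0:ℝ) ≤ matSpectralNorm W := norm_nonneg _
  have hcs := Real.sum_mul_le_sqrt_mul_sqrt Finset.univ c u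
  have hsqrt_u : Real.sqrt (∑ i, u i ^ 2) ≤ Real.sqrt d * matSpectralNorm W := by
    rw [show Real.sqrt d * matSpectralNorm W = Real.sqrt (matSpectralNorm W ^ 2 * d) by
      rw [Real.sqrt_mul (sq_nonneg _), Real.sqrt_sq hnormW]; ring]
    exact Real.sqrt_le_sqrt hsum_u
  calc (∑ i, c i * P (Sum.inl ()) (Sum.inr (Sum.inr i)))
      = ∑ i, c i * u i := rfl
    _ ≤ Real.sqrt (∑ i, c i ^ 2) * Real.sqrt (∑ i, u i ^ 2) := hcs
    _ ≤ Real.sqrt (∑ i, c i ^ 2) * (Real.sqrt d * matSpectralNorm W) :=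
        mul_le_mul_of_nonneg_left hsqrt_u (Real.sqrt_nonneg _)
    _ = Real.sqrt d * matSpectralNorm W * Real.sqrt (∑ i, c i ^ 2) := by ring
end

section
/- Let W ∈ ℝ^{m×d} have entries in {−1,+1}, let x = 0 ∈ ℝ^d, l = −1 (all-ones vector times −1), u = 1, and for each i set z_i = ½‖W_i‖₁ = d/2. Then (x,z) is feasible for the LP relaxation of the one-hidden-layer ReLU network: z ≥ 0, z ≥ Wx, z_i ≤ ((ReLU(t_i) − ReLU(s_i))/(t_i − s_i))(W_i x − s_i) + ReLU(s_i) where s_i = −‖W_i‖₁ and t_i = ‖W_i‖₁, and l ≤ x ≤ u. Consequently, with c = 1 (the all-ones vector in ℝ^m), the LP optimal value is at least md/2. -/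
open Finset in
/-- LP relaxation feasibility for a one-hidden-layer ReLU network `z = ReLU(W x)`
over the box `l ≤ x ≤ u`, with the convex outer envelope of each ReLU: lower bound
lines `z ≥ 0`, `z ≥ W x`, and the upper chord through `(s_i, ReLU s_i)` and
`(t_i, ReLU t_i)` where `s_i = min_{l≤x≤u} W_i x` and `t_i = max_{l≤x≤u} W_i x`. -/
def LPFeasible {m d : ℕ} (W : Matrix (Fin m) (Fin d) ℝ) (l u : Fin d → ℝ)
    (x : Fin d → ℝ) (z : Fin m → ℝ) : Prop :=
  (∀ i, 0 ≤ z i) ∧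
  (∀ i, (W.mulVec x) i ≤ z i) ∧
  (∀ i,
    let s := ∑ j, (min (W i j * l j) (W i j * u j))
    let t := ∑ j, (max (W i j * l j) (W i j * u j))
    z i ≤ (max t 0 - max s 0) / (t - s) * ((W.mulVec x) i - s) + max s 0) ∧
  (∀ j, l j ≤ x j ∧ x j ≤ u j)

/-- For a sign matrix `W ∈ {−1,+1}^{m×d}`, the point `x = 0`,
`z_i = ½‖W_i‖₁ = d/2` is feasible for the LP relaxation over the box `[-1,1]^d`,
and consequently (with objective vector `c = 𝟏`) the LP optimal value is at
least `m d / 2`. -/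
theorem stmt5 (m d : ℕ) (hd : 0 < d) (W : Matrix (Fin m) (Fin d) ℝ)
    (hW : ∀ i j, W i j = 1 ∨ W i j = -1) :
    LPFeasible W (fun _ => -1) (fun _ => 1) (fun _ => 0)
      (fun i => (1 / 2) * ∑ j, |W i j|) ∧
    (m * d : ℝ) / 2 ≤
      sSup {v : ℝ | ∃ x z, LPFeasible W (fun _ => -1) (fun _ => 1) x z ∧
        v = ∑ i, z i} := by
  have habs : ∀ i j, |W i j| = 1 := by
    intro i j; rcases hW i j with h | h <;> simp [h]
  have hdpos : (0:ℝ) < d := by exact_mod_cast hd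
  have hsum : ∀ i, ∑ j, |W i j| = (d:ℝ) := by
    intro i; simp [habs]
  have hmin : ∀ i, ∑ j, min (W i j * (-1:ℝ)) (W i j * 1) = -(d:ℝ) := by
    intro i
    have : ∀ j, min (W i j * (-1:ℝ)) (W i j * 1) = -1 := by
      intro j; rcases hW i j with h | h <;> norm_num [h]
    simp only [this]; simp
  have hmax : ∀ i, ∑ j, max (W i j * (-1:ℝ)) (W i j * 1) = (d:ℝ) := by
    intro i
    have : ∀ j, max (W i j * (-1:ℝ)) (W i j * 1) = 1 := by
      intro j; rcases hW i j with h | h <;> norm_num [h]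
    simp only [this]; simp
  have hx0 : Matrix.mulVec W (fun _ => (0:ℝ)) = fun _ => 0 := by
    funext i; simp [Matrix.mulVec, dotProduct]
  have hfeas : LPFeasible W (fun _ => -1) (fun _ => 1) (fun _ => 0)
      (fun i => (1/2) * ∑ j, |W i j|) := by
    refine ⟨?_, ?_, ?_, ?_⟩
    · intro i; simp only [hsum]; positivity
    · intro i; simp only [hx0, hsum]; positivity
    · intro i
      simp only [hx0, hmin, hmax, hsum]
      rw [max_eq_left hdpos.le, max_eq_right (by linarith)]
      have heq : ((d:ℝ) - 0)/((d:ℝ) - -(d:ℝ)) * (0 - -(d:ℝ)) + 0 = (d:ℝ)/2 := by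
        field_simp; ring
      rw [heq]; linarith
    · intro j; norm_num
  refine ⟨hfeas, ?_⟩
  have hmem : (∑ i, (1/2) * ∑ j, |W i j| : ℝ) ∈
      {v : ℝ | ∃ x z, LPFeasible W (fun _ => -1) (fun _ => 1) x z ∧ v = ∑ i, z i} :=
    ⟨_, _, hfeas, rfl⟩
  have hval : (∑ i, (1/2) * ∑ j, |W i j| : ℝ) = (m*d:ℝ)/2 := by
    simp [hsum]; ring
  have hbdd : BddAbove {v : ℝ | ∃ x z, LPFeasible W (fun _ => -1) (fun _ => 1) x z ∧
      v = ∑ i, z i} := by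
    refine ⟨(m*d : ℝ), ?_⟩
    rintro v ⟨x, z, ⟨hz0, hzw, hzu, hxb⟩, rfl⟩
    have hWx : ∀ i, |(W.mulVec x) i| ≤ d := by
      intro i
      calc |(W.mulVec x) i| = |∑ j, W i j * x j| := rfl
      _ ≤ ∑ j, |W i j * x j| := Finset.abs_sum_le_sum_abs _ _
      _ ≤ ∑ j : Fin d, (1:ℝ) := by
          apply Finset.sum_le_sum; intro j _
          rw [abs_mul, habs, one_mul, abs_le]
          exact ⟨by simpa using (hxb j).1, by simpa using (hxb j).2⟩
      _ = d := by simp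
    have hz : ∀ i, z i ≤ d := by
      intro i
      have h := hzu i
      simp only [hmin, hmax] at h
      rw [max_eq_left hdpos.le, max_eq_right (by linarith)] at h
      have habs' := abs_le.mp (hWx i)
      rw [div_mul_eq_mul_div] at h
      have h2 : ((d:ℝ) - 0) * (W.mulVec x i - -(d:ℝ)) / ((d:ℝ) - -(d:ℝ)) + 0 ≤ (d:ℝ) := by
        rw [add_zero, div_le_iff₀ (by linarith)]
        nlinarith [habs'.2]
      linarith
    calc ∑ i, z i ≤ ∑ _i : Fin m, (d:ℝ) := Finset.sum_le_sum (fun i _ => hz i)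
    _ = m * d := by simp
  calc (m*d:ℝ)/2 = _ := hval.symm
  _ ≤ _ := le_csSup hbdd hmem
end

section
/- Let P be a symmetric PSD matrix indexed by {1, x, z} (scalars) with P[1] = 1, P[z²] = P[xz], P[z] ≥ 0, P[z] ≥ P[x], and P[x²] ≤ c² for some c ≥ 0. Then P[z] ≤ (c + P[x])/2 ≤ c. -/
/-- Let `P` be a symmetric PSD 3×3 moment matrix indexed by `1, x, z`
(indices 0, 1, 2) with `P[1] = 1`, `P[z²] = P[xz]`, `P[z] ≥ 0`, `P[z] ≥ P[x]`, and
`P[x²] ≤ c²` for some `c ≥ 0`. Then `P[z] ≤ (c + P[x])/2 ≤ c`. -/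
theorem stmt15 (c : ℝ) (hc : 0 ≤ c) (P : Matrix (Fin 3) (Fin 3) ℝ)
    (hP : P.PosSemidef)
    (h11 : P 0 0 = 1)
    (hq : P 2 2 = P 1 2)
    (hz : 0 ≤ P 0 2)
    (hzx : P 0 1 ≤ P 0 2)
    (hx2 : P 1 1 ≤ c ^ 2) :
    P 0 2 ≤ (c + P 0 1) / 2 ∧ (c + P 0 1) / 2 ≤ c := by
  have hsym := hP.1
  have e01 : P 1 0 = P 0 1 := by
    have := congrFun (congrFun hsym 0) 1; simpa [Matrix.transpose_apply] using this
  have e02 : P 2 0 = P 0 2 := by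
    have := congrFun (congrFun hsym 0) 2; simpa [Matrix.transpose_apply] using this
  have e12 : P 2 1 = P 1 2 := by
    have := congrFun (congrFun hsym 1) 2; simpa [Matrix.transpose_apply] using this
  have key : ∀ v : Fin 3 → ℝ, 0 ≤ v 0 * (P 0 0 * v 0 + P 0 1 * v 1 + P 0 2 * v 2)
      + v 1 * (P 1 0 * v 0 + P 1 1 * v 1 + P 1 2 * v 2)
      + v 2 * (P 2 0 * v 0 + P 2 1 * v 1 + P 2 2 * v 2) := by
    intro v
    have := hP.dotProduct_mulVec_nonneg v
    simpa [dotProduct, Matrix.mulVec, Fin.sum_univ_three, mul_comm, mul_assoc,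
      mul_left_comm] using this
  have h1 := key ![c, 1, -2]
  have h2 := key ![P 0 1, -1, 0]
  have h3 := key ![P 0 2, 0, -1]
  have h4 := key ![0, 1, -1]
  simp [Matrix.cons_val_zero, Matrix.cons_val_one, h11, e01, e02, e12, hq] at h1 h2 h3 h4
  constructor
  · rcases hc.eq_or_lt with rfl | hcpos
    · nlinarith [h1, h2, h3, h4, hx2, hz, sq_nonneg (P 0 2 + P 0 1), sq_nonneg (P 0 2), sq_nonneg (P 0 1)]
    · nlinarith [h1, h2, h3, h4, hx2, hz, mul_pos hcpos hcpos]
  · nlinarith [h2, hx2, sq_nonneg (c - P 0 1)]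
end

section
/- Let P ⪰ 0 be indexed by {1, x₁,...,x_d, z₁,...,z_m} with P[1]=1, satisfying the ReLU quadratic constraints P[z_i²] = W_i^T P[x z_i] and the input constraints P[x_j²] ≤ 1 for all j. Then tr(P[zz^T]) ≤ d‖W‖₂². -/
open Matrix

lemma mulVec_sq_le {m d : ℕ} (W : Matrix (Fin m) (Fin d) ℝ) (v : Fin d → ℝ) :
    ∑ i, (W *ᵥ v) i ^ 2 ≤ matSpectralNorm W ^ 2 * ∑ j, v j ^ 2 := by
  set x : EuclideanSpace ℝ (Fin d) := (WithLp.equiv 2 (Fin d → ℝ)).symm v with hxdef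
  have hx : ‖x‖ = Real.sqrt (∑ j, v j ^ 2) := by
    rw [EuclideanSpace.norm_eq]
    simp [hxdef, Real.norm_eq_abs, sq_abs]
  have hy : ‖Matrix.toEuclideanLin W x‖ = Real.sqrt (∑ i, (W *ᵥ v) i ^ 2) := by
    rw [EuclideanSpace.norm_eq]
    congr 1
    refine Finset.sum_congr rfl fun i _ => ?_
    rw [Matrix.toEuclideanLin_apply]
    simp [hxdef, Real.norm_eq_abs, sq_abs]
  have hb := (LinearMap.toContinuousLinearMap (Matrix.toEuclideanLin W)).le_opNorm x
  rw [LinearMap.coe_toContinuousLinearMap'] at hb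
  rw [hy, hx] at hb
  have h1 : ∑ i, (W *ᵥ v) i ^ 2 = Real.sqrt (∑ i, (W *ᵥ v) i ^ 2) ^ 2 := by
    rw [Real.sq_sqrt (Finset.sum_nonneg fun i _ => sq_nonneg _)]
  rw [h1]
  calc Real.sqrt (∑ i, (W *ᵥ v) i ^ 2) ^ 2
      ≤ (matSpectralNorm W * Real.sqrt (∑ j, v j ^ 2)) ^ 2 := by
        apply pow_le_pow_left₀ (Real.sqrt_nonneg _) hb
    _ = matSpectralNorm W ^ 2 * ∑ j, v j ^ 2 := by
        rw [mul_pow, Real.sq_sqrt (Finset.sum_nonneg fun i _ => sq_nonneg _)]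

/-- Let `P ⪰ 0` be a moment matrix indexed by `{1, x₁,…,x_d, z₁,…,z_m}`
with `P[1] = 1`, satisfying the ReLU quadratic constraints `P[z_i²] = W_iᵀ P[x z_i]`
and the input constraints `P[x_j²] ≤ 1`. Then `tr P[zzᵀ] ≤ d ‖W‖₂²`. -/
theorem stmt19 (m d : ℕ) (W : Matrix (Fin m) (Fin d) ℝ)
    (P : Matrix (Unit ⊕ Fin d ⊕ Fin m) (Unit ⊕ Fin d ⊕ Fin m) ℝ)
    (hP : P.PosSemidef)
    (h11 : P (Sum.inl ()) (Sum.inl ()) = 1)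
    (hrelu : ∀ i, P (Sum.inr (Sum.inr i)) (Sum.inr (Sum.inr i)) =
      ∑ j, W i j * P (Sum.inr (Sum.inl j)) (Sum.inr (Sum.inr i)))
    (hinput : ∀ j, P (Sum.inr (Sum.inl j)) (Sum.inr (Sum.inl j)) ≤ 1) :
    ∑ i, P (Sum.inr (Sum.inr i)) (Sum.inr (Sum.inr i)) ≤ d * matSpectralNorm W ^ 2 := by
  classical
  have hsym : ∀ a b, P a b = P b a := by
    intro a b
    have := congrFun (congrFun hP.1 b) a
    simpa [Matrix.conjTranspose_apply] using this
  -- step 1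
  have step1 : ∀ i, P (Sum.inr (Sum.inr i)) (Sum.inr (Sum.inr i)) ≤
      ∑ j, ∑ k, W i j * (P (Sum.inr (Sum.inl j)) (Sum.inr (Sum.inl k)) * W i k) := by
    intro i
    set v : Unit ⊕ Fin d ⊕ Fin m → ℝ :=
      Sum.elim (fun _ => 0) (Sum.elim (fun j => W i j)
        (fun k => if k = i then -1 else 0)) with hv
    have h0 := hP.dotProduct_mulVec_nonneg v
    have expand : star v ⬝ᵥ (P *ᵥ v) =
        (∑ j, ∑ k, W i j * (P (Sum.inr (Sum.inl j)) (Sum.inr (Sum.inl k)) * W i k))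
        - ∑ j, W i j * P (Sum.inr (Sum.inl j)) (Sum.inr (Sum.inr i)) := by
      simp only [dotProduct, Matrix.mulVec, dotProduct, star, id_eq, hv, Fintype.sum_sum_type,
        Sum.elim_inl, Sum.elim_inr, Sum.elim_inl, zero_mul, mul_zero, ite_mul, mul_ite,
        neg_mul, mul_neg, neg_neg, one_mul, mul_one, Finset.sum_ite_eq',
        Finset.mem_univ, if_true, Finset.sum_const_zero, zero_add, add_zero,
        Finset.mul_sum, Finset.sum_neg_distrib]
      have hzx : ∀ k, P (Sum.inr (Sum.inr i)) (Sum.inr (Sum.inl k)) =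
          P (Sum.inr (Sum.inl k)) (Sum.inr (Sum.inr i)) := fun k => hsym _ _
      simp only [hzx, hrelu i, mul_add, mul_neg, Finset.sum_add_distrib, Finset.mul_sum]
      have : ∀ (j k : Fin d), W i j * (P (Sum.inr (Sum.inl j)) (Sum.inr (Sum.inl k)) * W i k)
          = W i j * P (Sum.inr (Sum.inl j)) (Sum.inr (Sum.inl k)) * W i k := fun j k => by ring
      simp only [this]
      have hc : ∀ j, P (Sum.inr (Sum.inl j)) (Sum.inr (Sum.inr i)) * W i j
          = W i j * P (Sum.inr (Sum.inl j)) (Sum.inr (Sum.inr i)) := fun j => by ring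
      simp only [hc]
      simp only [Finset.sum_neg_distrib]
      ring
    rw [expand] at h0
    have := hrelu i
    linarith [h0]
  -- step 2
  have hPxx : (P.submatrix (fun j : Fin d => Sum.inr (Sum.inl j))
      (fun j : Fin d => Sum.inr (Sum.inl j))).PosSemidef := hP.submatrix _
  obtain ⟨B, hB⟩ : ∃ B : Matrix (Fin d) (Fin d) ℝ, (P.submatrix (fun j : Fin d => Sum.inr (Sum.inl j))
      (fun j : Fin d => Sum.inr (Sum.inl j))) = Bᴴ * B := by
    open scoped MatrixOrder in
    obtain ⟨B, hB⟩ := CStarAlgebra.nonneg_iff_eq_star_mul_self.mp hPxx.nonneg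
    exact ⟨B, by rw [hB, Matrix.star_eq_conjTranspose]⟩
  have hentry : ∀ j k : Fin d, P (Sum.inr (Sum.inl j)) (Sum.inr (Sum.inl k))
      = ∑ l, B l j * B l k := by
    intro j k
    have := congrFun (congrFun hB j) k
    simpa [Matrix.mul_apply, Matrix.conjTranspose_apply, Matrix.submatrix_apply] using this
  have key : ∀ i, ∑ j, ∑ k, W i j * (P (Sum.inr (Sum.inl j)) (Sum.inr (Sum.inl k)) * W i k)
      = ∑ l, (∑ j, W i j * B l j) ^ 2 := by
    intro i
    calc ∑ j, ∑ k, W i j * (P (Sum.inr (Sum.inl j)) (Sum.inr (Sum.inl k)) * W i k)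
        = ∑ j, ∑ k, ∑ l, (W i j * B l j) * (W i k * B l k) := by
          refine Finset.sum_congr rfl fun j _ => Finset.sum_congr rfl fun k _ => ?_
          rw [hentry, Finset.sum_mul, Finset.mul_sum]
          exact Finset.sum_congr rfl fun l _ => by ring
      _ = ∑ j, ∑ l, ∑ k, (W i j * B l j) * (W i k * B l k) :=
          Finset.sum_congr rfl fun j _ => Finset.sum_comm
      _ = ∑ l, ∑ j, ∑ k, (W i j * B l j) * (W i k * B l k) := Finset.sum_comm
      _ = ∑ l, (∑ j, W i j * B l j) ^ 2 := by
          refine Finset.sum_congr rfl fun l _ => ?_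
          rw [sq, Finset.sum_mul_sum]
  have htr : ∑ l, ∑ j, B l j ^ 2 ≤ (d : ℝ) := by
    rw [Finset.sum_comm]
    calc ∑ j, ∑ l, B l j ^ 2 = ∑ j : Fin d, P (Sum.inr (Sum.inl j)) (Sum.inr (Sum.inl j)) := by
          refine Finset.sum_congr rfl fun j _ => ?_
          rw [hentry]
          exact Finset.sum_congr rfl fun l _ => (sq (B l j)).symm ▸ (sq (B l j)) ▸ rfl
      _ ≤ ∑ j : Fin d, (1 : ℝ) := Finset.sum_le_sum fun j _ => hinput j
      _ = (d : ℝ) := by simp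
  calc ∑ i, P (Sum.inr (Sum.inr i)) (Sum.inr (Sum.inr i))
      ≤ ∑ i, ∑ j, ∑ k, W i j * (P (Sum.inr (Sum.inl j)) (Sum.inr (Sum.inl k)) * W i k) :=
        Finset.sum_le_sum fun i _ => step1 i
    _ = ∑ l, ∑ i, ((W *ᵥ fun j => B l j) i) ^ 2 := by
        simp only [key]
        rw [Finset.sum_comm]
        refine Finset.sum_congr rfl fun l _ => Finset.sum_congr rfl fun i _ => ?_
        simp [Matrix.mulVec, dotProduct]
    _ ≤ ∑ l, matSpectralNorm W ^ 2 * ∑ j, B l j ^ 2 :=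
        Finset.sum_le_sum fun l _ => mulVec_sq_le W _
    _ = matSpectralNorm W ^ 2 * ∑ l, ∑ j, B l j ^ 2 := by rw [Finset.mul_sum]
    _ ≤ matSpectralNorm W ^ 2 * d := by
        exact mul_le_mul_of_nonneg_left htr (sq_nonneg _)
    _ = d * matSpectralNorm W ^ 2 := by ring
end
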